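/- Let λ > 0, a ≥ 0, and suppose λ_k ≤ σ·2^{k/2} for all integers k* < k ≤ k^* with σ > 0. For a nonnegative sequence (a_k) with ∑_{k>k*} 2^{2αk} a_k² ≤ M² (α ≥ 1/2) and ∑_{k>k*} 2^{2α₀k}a_k² ≤ M₀² (0 ≤ α₀ ≤ α), and for any t₀ > 0, there exists an integer k̄ with k* ≤ k̄ ≤ k^* such that ∑_{k=k*+1}^{k^*} λ_k min(a_k, λ_k) ≤ σ^γ [ t₀^{−(1−q/2−α₀q)_+} J_{1−q/2−α₀q}^{(q)}(k*, k̄) M₀^q + t₀^{α−1/2} J_{α−1/2}^{(1)}(k̄, k^*) M ], where γ is as in Proposition 1 and J_c^{(q)} is the partial geometric-series functional. -/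

import Mathlib

open Finset


lemma pow2_rpow (x e : ℝ) (hx : 0 ≤ x) : (x ^ 2) ^ e = x ^ (2 * e) := by
  rw [← Real.rpow_natCast x 2, ← Real.rpow_mul hx]
  norm_num

lemma holder_fin {s : Finset ℕ} {u v : ℕ → ℝ} (hu : ∀ i, 0 ≤ u i) (hv : ∀ i, 0 ≤ v i)
    {θ : ℝ} (hθ0 : 0 < θ) (hθ1 : θ ≤ 1) :
    ∑ i ∈ s, u i ^ θ * v i ^ (1 - θ) ≤ (∑ i ∈ s, u i) ^ θ * (∑ i ∈ s, v i) ^ (1 - θ) := by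
  rcases eq_or_lt_of_le hθ1 with h1 | h1
  · simp [h1]
  · have hθ1' : (0:ℝ) < 1 - θ := by linarith
    have hpq : Real.HolderConjugate (1/θ) (1/(1-θ)) :=
      Real.holderConjugate_iff.mpr ⟨by rw [lt_div_iff₀ hθ0]; linarith, by
        rw [one_div, one_div, inv_inv, inv_inv]; ring⟩
    have key := Real.inner_le_Lp_mul_Lq_of_nonneg (s := s) (f := fun i => u i ^ θ)
      (g := fun i => v i ^ (1 - θ)) hpq (fun i _ => Real.rpow_nonneg (hu i) _)
      (fun i _ => Real.rpow_nonneg (hv i) _)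
    simp only [one_div_one_div] at key
    refine le_trans key (le_of_eq ?_)
    congr 1
    · congr 1
      refine Finset.sum_congr rfl fun i _ => ?_
      rw [← Real.rpow_mul (hu i), mul_one_div, div_self hθ0.ne', Real.rpow_one]
    · congr 1
      refine Finset.sum_congr rfl fun i _ => ?_
      rw [← Real.rpow_mul (hv i), mul_one_div, div_self hθ1'.ne', Real.rpow_one]

lemma subsum_le (ks k1 k2 : ℕ) (hk1 : ks ≤ k1) (β : ℝ) (a : ℕ → ℝ) (Mb : ℝ)
    (hs : Summable (fun n : ℕ => (2:ℝ) ^ (2*β*((ks:ℝ)+1+(n:ℝ))) * (a (ks+1+n))^2))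
    (hb : ∑' n : ℕ, (2:ℝ) ^ (2*β*((ks:ℝ)+1+(n:ℝ))) * (a (ks+1+n))^2 ≤ Mb^2) :
    ∑ k ∈ Finset.Ioc k1 k2, (2:ℝ) ^ (2*β*(k:ℝ)) * (a k)^2 ≤ Mb ^ 2 := by
  have step1 : ∑ k ∈ Finset.Ioc k1 k2, (2:ℝ)^(2*β*(k:ℝ)) * a k^2
      ≤ ∑ k ∈ Finset.Ioc ks k2, (2:ℝ)^(2*β*(k:ℝ)) * a k^2 :=
    Finset.sum_le_sum_of_subset_of_nonneg (Finset.Ioc_subset_Ioc_left hk1)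
      (fun i _ _ => by positivity)
  refine le_trans step1 (le_trans ?_ hb)
  have hset : Finset.Ioc ks k2 = Finset.Ico (ks+1) (k2+1) := by
    ext x; simp [Finset.mem_Ioc, Finset.mem_Ico]
  rw [hset, Finset.sum_Ico_eq_sum_range]
  calc ∑ i ∈ Finset.range (k2+1-(ks+1)), (2:ℝ)^(2*β*((ks+1+i : ℕ):ℝ)) * a (ks+1+i)^2
      = ∑ i ∈ Finset.range (k2+1-(ks+1)), (2:ℝ)^(2*β*((ks:ℝ)+1+(i:ℝ))) * (a (ks+1+i))^2 := by
        refine Finset.sum_congr rfl fun i _ => ?_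
        congr 2
        push_cast
        ring
    _ ≤ _ := Summable.sum_le_tsum _ (fun i _ => by positivity) hs

lemma geo_low (c θ : ℝ) (hθ : θ ≠ 0) (ks kb : ℕ) :
    ∑ k ∈ Finset.Icc (ks+1) kb, (2:ℝ) ^ (c * (k:ℝ) / θ)
      = (2:ℝ) ^ (c * (kb:ℝ) / θ) * ∑ j ∈ Finset.range (kb - ks), (2:ℝ) ^ (-c * (j:ℝ) / θ) := by
  have hset : Finset.Icc (ks+1) kb = Finset.Ico (ks+1) (kb+1) := by
    ext x; simp [Finset.mem_Icc, Finset.mem_Ico]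
  rw [hset, Finset.sum_Ico_eq_sum_range, show kb + 1 - (ks+1) = kb - ks from by omega,
    ← Finset.sum_range_reflect, Finset.mul_sum]
  refine Finset.sum_congr rfl fun j hj => ?_
  have hj' : j < kb - ks := Finset.mem_range.mp hj
  have h1 : ks + 1 + (kb - ks - 1 - j) = kb - j := by omega
  rw [h1, ← Real.rpow_add two_pos]
  congr 1
  have hjkb : j ≤ kb := by omega
  rw [Nat.cast_sub hjkb]
  ring

lemma geo_high (e : ℝ) (kb ke : ℕ) :
    ∑ k ∈ Finset.Icc (kb+1) ke, (2:ℝ) ^ (e * (k:ℝ))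
      = (2:ℝ) ^ (e * ((kb:ℝ)+1)) * ∑ j ∈ Finset.range (ke - kb), (2:ℝ) ^ (e * (j:ℝ)) := by
  have hset : Finset.Icc (kb+1) ke = Finset.Ico (kb+1) (ke+1) := by
    ext x; simp [Finset.mem_Icc, Finset.mem_Ico]
  rw [hset, Finset.sum_Ico_eq_sum_range, show ke + 1 - (kb+1) = ke - kb from by omega,
    Finset.mul_sum]
  refine Finset.sum_congr rfl fun j _ => ?_
  rw [← Real.rpow_add two_pos]
  congr 1
  push_cast
  ring

lemma kb_spec (ks ke : ℕ) (hks : ks ≤ ke) (U : ℝ) (hU : 0 < U) :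
    ∃ kb : ℕ, ks ≤ kb ∧ kb ≤ ke ∧
      (ks < kb → (2:ℝ) ^ (kb:ℝ) ≤ U) ∧ (kb < ke → U ≤ (2:ℝ) ^ ((kb:ℝ)+1)) := by
  set n : ℕ := (⌊Real.logb 2 U⌋).toNat with hn
  refine ⟨min ke (max ks n), le_min hks (le_max_left _ _), min_le_left _ _, ?_, ?_⟩
  · intro h
    have t1 : min ke (max ks n) ≤ max ks n := min_le_right _ _
    have hkbn : min ke (max ks n) ≤ n := by
      rcases le_total ks n with h' | h'
      · exact t1.trans (le_of_eq (max_eq_right h'))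
      · have : min ke (max ks n) ≤ ks := t1.trans (le_of_eq (max_eq_left h'))
        omega
    have hn0 : 0 < n := lt_of_le_of_lt (Nat.zero_le ks) (lt_of_lt_of_le h hkbn)
    have hfl : (0:ℤ) < ⌊Real.logb 2 U⌋ := by
      by_contra hh
      push_neg at hh
      rw [hn, Int.toNat_of_nonpos hh] at hn0
      exact lt_irrefl 0 hn0
    have h2 : ((n:ℕ):ℝ) ≤ Real.logb 2 U := by
      have h3 := Int.floor_le (Real.logb 2 U)
      have hcast : ((n:ℕ):ℝ) = ((⌊Real.logb 2 U⌋ : ℤ) : ℝ) := by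
        rw [hn]
        exact_mod_cast congrArg (fun z : ℤ => (z:ℝ)) (Int.toNat_of_nonneg hfl.le)
      rw [hcast]; exact h3
    calc (2:ℝ) ^ ((min ke (max ks n) : ℕ):ℝ) ≤ (2:ℝ) ^ (Real.logb 2 U) := by
          apply Real.rpow_le_rpow_of_exponent_le one_le_two
          exact le_trans (by exact_mod_cast hkbn) h2
      _ = U := Real.rpow_logb two_pos (by norm_num) hU
  · intro h
    have hkb : min ke (max ks n) = max ks n := by
      rcases le_total ke (max ks n) with h' | h'
      · rw [min_eq_left h'] at h; omega
      · exact min_eq_right h'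
    have hnkb : n ≤ min ke (max ks n) := by rw [hkb]; exact le_max_right _ _
    have h3 : Real.logb 2 U ≤ ((min ke (max ks n):ℕ):ℝ) + 1 := by
      have h4 : Real.logb 2 U < (⌊Real.logb 2 U⌋ : ℝ) + 1 := Int.lt_floor_add_one _
      have h5 : ((⌊Real.logb 2 U⌋:ℤ):ℝ) ≤ ((n:ℕ):ℝ) := by exact_mod_cast Int.self_le_toNat _
      have h6 : ((n:ℕ):ℝ) ≤ ((min ke (max ks n):ℕ):ℝ) := by exact_mod_cast hnkb
      linarith
    calc U = (2:ℝ) ^ (Real.logb 2 U) := (Real.rpow_logb two_pos (by norm_num) hU).symm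
      _ ≤ _ := Real.rpow_le_rpow_of_exponent_le one_le_two h3

/-- The partial geometric-series functional J_c^{(q)}(k₁,k₂). -/
noncomputable def Jfun (c q : ℝ) (k1 k2 : ℕ) : ℝ :=
  if c ≤ 0 then
    (∑ k ∈ Finset.Icc (k1 + 1) k2, (2 : ℝ) ^ (c * (k : ℝ) / (1 - q / 2))) ^ (1 - q / 2)
  else
    (∑ k ∈ Finset.range (k2 - k1), (2 : ℝ) ^ (-c * (k : ℝ) / (1 - q / 2))) ^ (1 - q / 2)

/-- Inequality (prop-11): the intermediate one-parameter-family bound in the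
    proof of Proposition 1: there is a splitting level k̄ such that the sum of
    capped penalties is bounded by
    σ^γ [t₀^{-(1-q/2-α₀q)_+} J^{(q)}_{1-q/2-α₀q}(k*,k̄) M₀^q
         + t₀^{α-1/2} J^{(1)}_{α-1/2}(k̄,k^*) M]. -/
theorem stmt17 (σ α q α₀ t₀ M M₀ : ℝ) (ks ke : ℕ) (lam a : ℕ → ℝ)
    (hσ : 0 < σ) (hα : 1 / 2 ≤ α) (hq0 : 0 ≤ q) (hq1 : q ≤ 1)
    (hα₀0 : 0 ≤ α₀) (hα₀ : α₀ ≤ α) (hks : ks ≤ ke)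
    (hlam0 : ∀ k, 0 ≤ lam k)
    (hlam : ∀ k, ks < k → k ≤ ke → lam k ≤ σ * (2 : ℝ) ^ ((k : ℝ) / 2))
    (ha : ∀ k, 0 ≤ a k) (hM : 0 ≤ M) (hM₀ : 0 ≤ M₀) (ht₀ : 0 < t₀)
    (hsumα : Summable (fun n : ℕ =>
      (2 : ℝ) ^ (2 * α * ((ks : ℝ) + 1 + (n : ℝ))) * (a (ks + 1 + n)) ^ 2))
    (hsumα₀ : Summable (fun n : ℕ =>
      (2 : ℝ) ^ (2 * α₀ * ((ks : ℝ) + 1 + (n : ℝ))) * (a (ks + 1 + n)) ^ 2))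
    (hMb : ∑' n : ℕ, (2 : ℝ) ^ (2 * α * ((ks : ℝ) + 1 + (n : ℝ))) * (a (ks + 1 + n)) ^ 2
        ≤ M ^ 2)
    (hM₀b : ∑' n : ℕ, (2 : ℝ) ^ (2 * α₀ * ((ks : ℝ) + 1 + (n : ℝ))) * (a (ks + 1 + n)) ^ 2
        ≤ M₀ ^ 2)
    (γ : ℝ)
    (hγ : γ = if α = 1 / 2 then 1 else
      ((2 - q) * (α - 1 / 2) + max (1 - q / 2 - q * α₀) 0) /
        (α - 1 / 2 + max (1 - q / 2 - q * α₀) 0)) :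
    ∃ kb : ℕ, ks ≤ kb ∧ kb ≤ ke ∧
      ∑ k ∈ Finset.Icc (ks + 1) ke, lam k * min (a k) (lam k)
        ≤ σ ^ γ * (t₀ ^ (-(max (1 - q / 2 - α₀ * q) 0)) * Jfun (1 - q / 2 - α₀ * q) q ks kb
              * M₀ ^ q
            + t₀ ^ (α - 1 / 2) * Jfun (α - 1 / 2) 1 kb ke * M) := by
  rw [mul_comm q α₀] at hγ
  set c : ℝ := 1 - q / 2 - α₀ * q with hc
  set m : ℝ := max c 0 with hm
  set e : ℝ := α - 1 / 2 with he
  set d : ℝ := e + m with hd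
  have hm0 : 0 ≤ m := le_max_right _ _
  have he0 : 0 ≤ e := by rw [he]; linarith
  have hθpos : (0:ℝ) < 1 - q / 2 := by linarith
  have hθ1 : 1 - q / 2 ≤ 1 := by linarith
  set U : ℝ := σ ^ ((q - 1) / d) / t₀ with hUdef
  have hU0 : 0 < U := div_pos (Real.rpow_pos_of_pos hσ _) ht₀
  obtain ⟨kb, hkb1, hkb2, hA, hB⟩ := kb_spec ks ke hks U hU0
  refine ⟨kb, hkb1, hkb2, ?_⟩
  set u : ℕ → ℝ := fun k => (2:ℝ) ^ (c * (k:ℝ) / (1 - q/2)) with hu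
  set v : ℕ → ℝ := fun k => (2:ℝ) ^ (2*α₀*(k:ℝ)) * (a k)^2 with hv
  set w : ℕ → ℝ := fun k => (2:ℝ) ^ ((1-2*α) * (k:ℝ)) with hw
  set vA : ℕ → ℝ := fun k => (2:ℝ) ^ (2*α*(k:ℝ)) * (a k)^2 with hvA
  have hu0 : ∀ k, 0 ≤ u k := fun k => Real.rpow_nonneg (by norm_num) _
  have hv0 : ∀ k, 0 ≤ v k := fun k => mul_nonneg (Real.rpow_nonneg (by norm_num) _) (sq_nonneg _)
  have hw0 : ∀ k, 0 ≤ w k := fun k => Real.rpow_nonneg (by norm_num) _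
  have hvA0 : ∀ k, 0 ≤ vA k := fun k => mul_nonneg (Real.rpow_nonneg (by norm_num) _) (sq_nonneg _)
  have hJnn : ∀ (c' q' : ℝ) (k1 k2 : ℕ), 0 ≤ Jfun c' q' k1 k2 := by
    intro c' q' k1 k2
    unfold Jfun
    split <;>
      exact Real.rpow_nonneg (Finset.sum_nonneg fun i _ => Real.rpow_nonneg (by norm_num) _) _
  have hSv : ∑ k ∈ Finset.Ioc ks kb, v k ≤ M₀ ^ 2 := by
    simpa [hv] using subsum_le ks ks kb le_rfl α₀ a M₀ hsumα₀ hM₀b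
  have hSvA : ∑ k ∈ Finset.Ioc kb ke, vA k ≤ M ^ 2 := by
    simpa [hvA] using subsum_le ks kb ke hkb1 α a M hsumα hMb
  -- splitting
  have hIoc0 : Finset.Icc (ks+1) ke = Finset.Ioc ks ke := by
    ext x; simp [Finset.mem_Icc, Finset.mem_Ioc]
  have hsplit : ∑ k ∈ Finset.Icc (ks+1) ke, lam k * min (a k) (lam k)
      = (∑ k ∈ Finset.Ioc ks kb, lam k * min (a k) (lam k))
        + ∑ k ∈ Finset.Ioc kb ke, lam k * min (a k) (lam k) := by
    rw [hIoc0]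
    exact (Finset.sum_Ioc_consecutive _ hkb1 hkb2).symm
  -- low termwise bound
  have hterm_low : ∀ k ∈ Finset.Ioc ks kb, lam k * min (a k) (lam k)
      ≤ σ ^ (2 - q) * (u k ^ (1 - q/2) * v k ^ (1 - (1 - q/2))) := by
    intro k hk
    obtain ⟨hk1, hk2⟩ := Finset.mem_Ioc.mp hk
    have hlamk := hlam k hk1 (le_trans hk2 hkb2)
    have hmin0 : 0 ≤ min (a k) (lam k) := le_min (ha k) (hlam0 k)
    have hRnn : 0 ≤ σ ^ (2 - q) * (u k ^ (1 - q/2) * v k ^ (1 - (1 - q/2))) := by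
      apply mul_nonneg (Real.rpow_nonneg hσ.le _)
      exact mul_nonneg (Real.rpow_nonneg (hu0 k) _) (Real.rpow_nonneg (hv0 k) _)
    rcases eq_or_lt_of_le hmin0 with h0 | h0
    · rw [← h0, mul_zero]; exact hRnn
    have hlp : 0 < lam k := lt_of_lt_of_le h0 (min_le_right _ _)
    have step1 : lam k * min (a k) (lam k) ≤ lam k ^ (2 - q) * a k ^ q := by
      have hsplitmin : min (a k) (lam k)
          = min (a k) (lam k) ^ q * min (a k) (lam k) ^ (1 - q) := by
        rw [← Real.rpow_add h0, show q + (1 - q) = 1 from by ring, Real.rpow_one]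
      nth_rewrite 1 [hsplitmin]
      calc lam k * (min (a k) (lam k) ^ q * min (a k) (lam k) ^ (1 - q))
          ≤ lam k * (a k ^ q * lam k ^ (1 - q)) := by
            apply mul_le_mul_of_nonneg_left _ (hlam0 k)
            exact mul_le_mul (Real.rpow_le_rpow h0.le (min_le_left _ _) hq0)
              (Real.rpow_le_rpow h0.le (min_le_right _ _) (by linarith))
              (Real.rpow_nonneg hmin0 _) (Real.rpow_nonneg (ha k) _)
        _ = lam k ^ (2 - q) * a k ^ q := by
            rw [mul_comm (a k ^ q) (lam k ^ (1 - q)), ← mul_assoc]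
            congr 1
            nth_rewrite 1 [← Real.rpow_one (lam k)]
            rw [← Real.rpow_add hlp, show (1:ℝ) + (1 - q) = 2 - q from by ring]
    have step2 : lam k ^ (2 - q) * a k ^ q ≤ (σ * (2:ℝ) ^ ((k:ℝ)/2)) ^ (2 - q) * a k ^ q := by
      apply mul_le_mul_of_nonneg_right _ (Real.rpow_nonneg (ha k) _)
      exact Real.rpow_le_rpow (hlam0 k) hlamk (by linarith)
    have hid : (σ * (2:ℝ) ^ ((k:ℝ)/2)) ^ (2 - q) * a k ^ q
        = σ ^ (2 - q) * (u k ^ (1 - q/2) * v k ^ (1 - (1 - q/2))) := by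
      have e1 : u k ^ (1 - q/2) = (2:ℝ) ^ (c * (k:ℝ)) := by
        simp only [hu]
        rw [← Real.rpow_mul (by norm_num : (0:ℝ) ≤ 2), div_mul_cancel₀ _ hθpos.ne']
      have e2 : v k ^ (1 - (1 - q/2)) = (2:ℝ) ^ (2*α₀*(k:ℝ) * (q/2)) * a k ^ q := by
        simp only [hv]
        rw [show (1 - (1 - q/2)) = q/2 from by ring,
          Real.mul_rpow (Real.rpow_nonneg (by norm_num) _) (sq_nonneg _),
          ← Real.rpow_mul (by norm_num : (0:ℝ) ≤ 2), pow2_rpow _ _ (ha k),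
          show 2 * (q/2) = q from by ring]
      have he3 : (2:ℝ) ^ (c * (k:ℝ)) * (2:ℝ) ^ (2*α₀*(k:ℝ) * (q/2))
          = (2:ℝ) ^ ((k:ℝ)/2 * (2 - q)) := by
        rw [← Real.rpow_add two_pos]
        congr 1
        rw [hc]; ring
      rw [e1, e2, Real.mul_rpow hσ.le (Real.rpow_nonneg (by norm_num) _),
        ← Real.rpow_mul (by norm_num : (0:ℝ) ≤ 2)]
      linear_combination (-(σ ^ (2 - q) * a k ^ q)) * he3
    calc lam k * min (a k) (lam k) ≤ lam k ^ (2 - q) * a k ^ q := step1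
      _ ≤ (σ * (2:ℝ) ^ ((k:ℝ)/2)) ^ (2 - q) * a k ^ q := step2
      _ = _ := hid
  -- high termwise bound
  have hterm_high : ∀ k ∈ Finset.Ioc kb ke, lam k * min (a k) (lam k)
      ≤ σ * (w k ^ ((1:ℝ)/2) * vA k ^ (1 - (1:ℝ)/2)) := by
    intro k hk
    obtain ⟨hk1, hk2⟩ := Finset.mem_Ioc.mp hk
    have hlamk := hlam k (lt_of_le_of_lt hkb1 hk1) hk2
    calc lam k * min (a k) (lam k) ≤ lam k * a k :=
          mul_le_mul_of_nonneg_left (min_le_left _ _) (hlam0 k)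
      _ ≤ (σ * (2:ℝ) ^ ((k:ℝ)/2)) * a k := mul_le_mul_of_nonneg_right hlamk (ha k)
      _ = σ * (w k ^ ((1:ℝ)/2) * vA k ^ (1 - (1:ℝ)/2)) := by
          have e1 : w k ^ ((1:ℝ)/2) = (2:ℝ) ^ ((1-2*α) * (k:ℝ) * (1/2)) := by
            simp only [hw]
            rw [← Real.rpow_mul (by norm_num : (0:ℝ) ≤ 2)]
          have e2 : vA k ^ (1 - (1:ℝ)/2) = (2:ℝ) ^ (2*α*(k:ℝ) * (1/2)) * a k := by
            simp only [hvA]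
            rw [show (1 - (1:ℝ)/2) = 1/2 from by norm_num,
              Real.mul_rpow (Real.rpow_nonneg (by norm_num) _) (sq_nonneg _),
              ← Real.rpow_mul (by norm_num : (0:ℝ) ≤ 2), pow2_rpow _ _ (ha k),
              show 2 * ((1:ℝ)/2) = 1 from by norm_num, Real.rpow_one]
          have he3 : (2:ℝ) ^ ((1-2*α) * (k:ℝ) * (1/2)) * (2:ℝ) ^ (2*α*(k:ℝ) * (1/2))
              = (2:ℝ) ^ ((k:ℝ)/2) := by
            rw [← Real.rpow_add two_pos]
            congr 1
            ring
          rw [e1, e2]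
          linear_combination (-(σ * a k)) * he3
  -- low sum bound
  have hlow : ∑ k ∈ Finset.Ioc ks kb, lam k * min (a k) (lam k)
      ≤ σ ^ (2-q) * ((∑ k ∈ Finset.Ioc ks kb, u k) ^ (1 - q/2) * M₀ ^ q) := by
    calc ∑ k ∈ Finset.Ioc ks kb, lam k * min (a k) (lam k)
        ≤ ∑ k ∈ Finset.Ioc ks kb, σ ^ (2-q) * (u k ^ (1 - q/2) * v k ^ (1 - (1 - q/2))) :=
          Finset.sum_le_sum hterm_low
      _ = σ ^ (2-q) * ∑ k ∈ Finset.Ioc ks kb, u k ^ (1 - q/2) * v k ^ (1 - (1 - q/2)) := by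
          rw [Finset.mul_sum]
      _ ≤ σ ^ (2-q) * ((∑ k ∈ Finset.Ioc ks kb, u k) ^ (1 - q/2)
            * (∑ k ∈ Finset.Ioc ks kb, v k) ^ (1 - (1 - q/2))) :=
          mul_le_mul_of_nonneg_left (holder_fin hu0 hv0 hθpos hθ1) (Real.rpow_nonneg hσ.le _)
      _ ≤ σ ^ (2-q) * ((∑ k ∈ Finset.Ioc ks kb, u k) ^ (1 - q/2) * M₀ ^ q) := by
          apply mul_le_mul_of_nonneg_left _ (Real.rpow_nonneg hσ.le _)
          apply mul_le_mul_of_nonneg_left _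
            (Real.rpow_nonneg (Finset.sum_nonneg fun i _ => hu0 i) _)
          calc (∑ k ∈ Finset.Ioc ks kb, v k) ^ (1 - (1 - q/2))
              ≤ (M₀^2) ^ (1 - (1 - q/2)) :=
                Real.rpow_le_rpow (Finset.sum_nonneg fun i _ => hv0 i) hSv (by linarith)
            _ = M₀ ^ q := by
                rw [pow2_rpow _ _ hM₀, show 2 * (1 - (1 - q/2)) = q from by ring]
  -- high sum bound
  have hhigh : ∑ k ∈ Finset.Ioc kb ke, lam k * min (a k) (lam k)
      ≤ σ * ((∑ k ∈ Finset.Ioc kb ke, w k) ^ ((1:ℝ)/2) * M) := by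
    calc ∑ k ∈ Finset.Ioc kb ke, lam k * min (a k) (lam k)
        ≤ ∑ k ∈ Finset.Ioc kb ke, σ * (w k ^ ((1:ℝ)/2) * vA k ^ (1 - (1:ℝ)/2)) :=
          Finset.sum_le_sum hterm_high
      _ = σ * ∑ k ∈ Finset.Ioc kb ke, w k ^ ((1:ℝ)/2) * vA k ^ (1 - (1:ℝ)/2) := by
          rw [Finset.mul_sum]
      _ ≤ σ * ((∑ k ∈ Finset.Ioc kb ke, w k) ^ ((1:ℝ)/2)
            * (∑ k ∈ Finset.Ioc kb ke, vA k) ^ (1 - (1:ℝ)/2)) :=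
          mul_le_mul_of_nonneg_left (holder_fin hw0 hvA0 (by norm_num) (by norm_num)) hσ.le
      _ ≤ σ * ((∑ k ∈ Finset.Ioc kb ke, w k) ^ ((1:ℝ)/2) * M) := by
          apply mul_le_mul_of_nonneg_left _ hσ.le
          apply mul_le_mul_of_nonneg_left _
            (Real.rpow_nonneg (Finset.sum_nonneg fun i _ => hw0 i) _)
          calc (∑ k ∈ Finset.Ioc kb ke, vA k) ^ (1 - (1:ℝ)/2)
              ≤ (M^2) ^ (1 - (1:ℝ)/2) :=
                Real.rpow_le_rpow (Finset.sum_nonneg fun i _ => hvA0 i) hSvA (by norm_num)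
            _ = M := by
                rw [pow2_rpow _ _ hM, show 2 * (1 - (1:ℝ)/2) = 1 from by norm_num,
                  Real.rpow_one]
  -- key A
  have hIocA : Finset.Ioc ks kb = Finset.Icc (ks+1) kb := by
    ext x; simp [Finset.mem_Ioc, Finset.mem_Icc]
  have keyA : σ ^ (2-q) * (∑ k ∈ Finset.Ioc ks kb, u k) ^ (1 - q/2)
      ≤ σ ^ γ * (t₀ ^ (-m) * Jfun c q ks kb) := by
    rcases le_or_gt c 0 with hc0 | hc0
    · have hm' : m = 0 := by rw [hm]; exact max_eq_right hc0
      have hJ : Jfun c q ks kb = (∑ k ∈ Finset.Ioc ks kb, u k) ^ (1 - q/2) := by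
        simp only [Jfun, if_pos hc0, hu]
        rw [hIocA]
      have hγ2 : γ = 2 - q := by
        by_cases hα' : α = 1/2
        · have hα₀' : α₀ ≤ 1/2 := by rw [hα'] at hα₀; exact hα₀
          have hprod : α₀ * q ≤ 1/2 * q := mul_le_mul_of_nonneg_right hα₀' hq0
          have hc0' : 1 - q / 2 - α₀ * q ≤ 0 := by rw [← hc]; exact hc0
          have hq : q = 1 := le_antisymm hq1 (by linarith)
          rw [hγ, if_pos hα', hq]; norm_num
        · have he' : e ≠ 0 := by rw [he]; exact sub_ne_zero_of_ne hα'
          rw [hγ, if_neg hα', hd, hm', add_zero, add_zero, mul_div_assoc,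
            div_self he', mul_one]
      rw [hJ, hγ2, hm', neg_zero, Real.rpow_zero, one_mul]
    · have hm' : m = c := by rw [hm]; exact max_eq_left hc0.le
      have hd0 : 0 < d := by rw [hd, hm']; linarith
      have hJ : Jfun c q ks kb
          = (∑ j ∈ Finset.range (kb - ks), (2:ℝ) ^ (-c * (j:ℝ) / (1 - q/2))) ^ (1 - q/2) := by
        simp only [Jfun, if_neg (not_le.mpr hc0)]
      rcases eq_or_lt_of_le hkb1 with hkk | hkk
      · rw [← hkk, Finset.Ioc_self, Finset.sum_empty, Real.zero_rpow hθpos.ne', mul_zero]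
        exact mul_nonneg (Real.rpow_nonneg hσ.le _)
          (mul_nonneg (Real.rpow_nonneg ht₀.le _) (hJnn _ _ _ _))
      · have hAk := hA hkk
        have hfac : (∑ k ∈ Finset.Ioc ks kb, u k) ^ (1 - q/2)
            = (2:ℝ) ^ (c * (kb:ℝ)) * Jfun c q ks kb := by
          rw [hIocA]
          simp only [hu]
          rw [geo_low c (1 - q/2) hθpos.ne' ks kb, hJ,
            Real.mul_rpow (Real.rpow_nonneg (by norm_num) _)
              (Finset.sum_nonneg fun i _ => Real.rpow_nonneg (by norm_num) _),
            ← Real.rpow_mul (by norm_num : (0:ℝ) ≤ 2), div_mul_cancel₀ _ hθpos.ne']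
        have hUb : (2:ℝ) ^ (c * (kb:ℝ)) ≤ σ ^ ((q-1)/d * c) * t₀ ^ (-c) := by
          have h1 : ((2:ℝ) ^ ((kb:ℝ))) ^ c ≤ U ^ c :=
            Real.rpow_le_rpow (Real.rpow_nonneg (by norm_num) _) hAk hc0.le
          have h2 : (2:ℝ) ^ (c * (kb:ℝ)) = ((2:ℝ) ^ ((kb:ℝ))) ^ c := by
            rw [← Real.rpow_mul (by norm_num : (0:ℝ) ≤ 2), mul_comm]
          have h3 : U ^ c = σ ^ ((q-1)/d * c) * t₀ ^ (-c) := by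
            rw [hUdef, Real.div_rpow (Real.rpow_nonneg hσ.le _) ht₀.le,
              ← Real.rpow_mul hσ.le, Real.rpow_neg ht₀.le, div_eq_mul_inv]
          rw [h2, ← h3]; exact h1
        have hγid : 2 - q + (q-1)/d * c = γ := by
          by_cases hα' : α = 1/2
          · have he' : e = 0 := by rw [he, hα']; ring
            rw [hγ, if_pos hα', hd, hm', he', zero_add]
            field_simp
            ring
          · have hd0' : e + c ≠ 0 := by rw [hd, hm'] at hd0; exact hd0.ne'
            rw [hγ, if_neg hα', hd, hm']
            field_simp
            ring
        calc σ ^ (2-q) * (∑ k ∈ Finset.Ioc ks kb, u k) ^ (1 - q/2)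
            = σ ^ (2-q) * ((2:ℝ) ^ (c * (kb:ℝ)) * Jfun c q ks kb) := by rw [hfac]
          _ ≤ σ ^ (2-q) * ((σ ^ ((q-1)/d * c) * t₀ ^ (-c)) * Jfun c q ks kb) := by
              apply mul_le_mul_of_nonneg_left _ (Real.rpow_nonneg hσ.le _)
              exact mul_le_mul_of_nonneg_right hUb (hJnn _ _ _ _)
          _ = σ ^ γ * (t₀ ^ (-m) * Jfun c q ks kb) := by
              rw [hm', ← hγid, Real.rpow_add hσ]
              ring
  -- key B
  have hIocB : Finset.Ioc kb ke = Finset.Icc (kb+1) ke := by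
    ext x; simp [Finset.mem_Ioc, Finset.mem_Icc]
  have keyB : σ * (∑ k ∈ Finset.Ioc kb ke, w k) ^ ((1:ℝ)/2)
      ≤ σ ^ γ * (t₀ ^ e * Jfun e 1 kb ke) := by
    by_cases hα' : α = 1/2
    · have he' : e = 0 := by rw [he, hα']; ring
      have hJ : Jfun e 1 kb ke = (∑ k ∈ Finset.Ioc kb ke, w k) ^ ((1:ℝ)/2) := by
        simp only [Jfun, if_pos (le_of_eq he')]
        rw [hIocB, show (1:ℝ) - 1/2 = 1/2 from by norm_num]
        congr 1
        refine Finset.sum_congr rfl fun k _ => ?_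
        simp only [hw]
        congr 1
        rw [he', hα']; ring
      have hγ1 : γ = 1 := by rw [hγ, if_pos hα']
      rw [hJ, hγ1, Real.rpow_one, he', Real.rpow_zero, one_mul]
    · have he'' : 0 < e := by
        rw [he]; have := lt_of_le_of_ne hα (Ne.symm hα'); linarith
      have hd0 : 0 < d := by rw [hd]; linarith
      rcases eq_or_lt_of_le hkb2 with hkk | hkk
      · rw [hkk, Finset.Ioc_self, Finset.sum_empty,
          Real.zero_rpow (by norm_num : ((1:ℝ)/2) ≠ 0), mul_zero]
        exact mul_nonneg (Real.rpow_nonneg hσ.le _)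
          (mul_nonneg (Real.rpow_nonneg ht₀.le _) (hJnn _ _ _ _))
      · have hBk := hB hkk
        have hJ : Jfun e 1 kb ke
            = (∑ j ∈ Finset.range (ke - kb), (2:ℝ) ^ ((1-2*α) * (j:ℝ))) ^ ((1:ℝ)/2) := by
          simp only [Jfun, if_neg (not_le.mpr he'')]
          rw [show (1:ℝ) - 1/2 = 1/2 from by norm_num]
          congr 1
          refine Finset.sum_congr rfl fun j _ => ?_
          congr 1
          rw [he]; ring
        have hfac : (∑ k ∈ Finset.Ioc kb ke, w k) ^ ((1:ℝ)/2)
            = (2:ℝ) ^ ((1-2*α) * ((kb:ℝ)+1) * (1/2)) * Jfun e 1 kb ke := by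
          rw [hIocB]
          simp only [hw]
          rw [geo_high (1-2*α) kb ke, hJ,
            Real.mul_rpow (Real.rpow_nonneg (by norm_num) _)
              (Finset.sum_nonneg fun i _ => Real.rpow_nonneg (by norm_num) _),
            ← Real.rpow_mul (by norm_num : (0:ℝ) ≤ 2)]
        have hUb : (2:ℝ) ^ ((1-2*α) * ((kb:ℝ)+1) * (1/2))
            ≤ σ ^ ((q-1)/d * (-e)) * t₀ ^ e := by
          have h1 : ((2:ℝ) ^ ((kb:ℝ)+1)) ^ (-e) ≤ U ^ (-e) :=
            Real.rpow_le_rpow_of_nonpos hU0 hBk (neg_nonpos.mpr he''.le)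
          have h2 : (2:ℝ) ^ ((1-2*α) * ((kb:ℝ)+1) * (1/2)) = ((2:ℝ) ^ ((kb:ℝ)+1)) ^ (-e) := by
            rw [← Real.rpow_mul (by norm_num : (0:ℝ) ≤ 2)]
            congr 1
            rw [he]; ring
          have h3 : U ^ (-e) = σ ^ ((q-1)/d * (-e)) * t₀ ^ e := by
            rw [hUdef, Real.div_rpow (Real.rpow_nonneg hσ.le _) ht₀.le,
              ← Real.rpow_mul hσ.le, Real.rpow_neg ht₀.le, div_inv_eq_mul]
          rw [h2, ← h3]; exact h1
        have hγid : 1 + (q-1)/d * (-e) = γ := by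
          have hd0' : e + m ≠ 0 := by rw [hd] at hd0; exact hd0.ne'
          rw [hγ, if_neg hα', hd]
          field_simp
          ring
        calc σ * (∑ k ∈ Finset.Ioc kb ke, w k) ^ ((1:ℝ)/2)
            = σ * ((2:ℝ) ^ ((1-2*α) * ((kb:ℝ)+1) * (1/2)) * Jfun e 1 kb ke) := by rw [hfac]
          _ ≤ σ * ((σ ^ ((q-1)/d * (-e)) * t₀ ^ e) * Jfun e 1 kb ke) := by
              apply mul_le_mul_of_nonneg_left _ hσ.le
              exact mul_le_mul_of_nonneg_right hUb (hJnn _ _ _ _)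
          _ = σ ^ γ * (t₀ ^ e * Jfun e 1 kb ke) := by
              rw [← hγid, Real.rpow_add hσ, Real.rpow_one]
              ring
  -- assembly
  have hT1 : ∑ k ∈ Finset.Ioc ks kb, lam k * min (a k) (lam k)
      ≤ σ ^ γ * (t₀ ^ (-m) * Jfun c q ks kb * M₀ ^ q) := by
    refine le_trans hlow ?_
    have hmul := mul_le_mul_of_nonneg_right keyA (Real.rpow_nonneg hM₀ q)
    calc σ ^ (2-q) * ((∑ k ∈ Finset.Ioc ks kb, u k) ^ (1 - q/2) * M₀ ^ q)
        = (σ ^ (2-q) * (∑ k ∈ Finset.Ioc ks kb, u k) ^ (1 - q/2)) * M₀ ^ q := by ring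
      _ ≤ (σ ^ γ * (t₀ ^ (-m) * Jfun c q ks kb)) * M₀ ^ q := hmul
      _ = σ ^ γ * (t₀ ^ (-m) * Jfun c q ks kb * M₀ ^ q) := by ring
  have hT2 : ∑ k ∈ Finset.Ioc kb ke, lam k * min (a k) (lam k)
      ≤ σ ^ γ * (t₀ ^ e * Jfun e 1 kb ke * M) := by
    refine le_trans hhigh ?_
    have hmul := mul_le_mul_of_nonneg_right keyB hM
    calc σ * ((∑ k ∈ Finset.Ioc kb ke, w k) ^ ((1:ℝ)/2) * M)
        = (σ * (∑ k ∈ Finset.Ioc kb ke, w k) ^ ((1:ℝ)/2)) * M := by ring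
      _ ≤ (σ ^ γ * (t₀ ^ e * Jfun e 1 kb ke)) * M := hmul
      _ = σ ^ γ * (t₀ ^ e * Jfun e 1 kb ke * M) := by ring
  rw [hsplit]
  calc (∑ k ∈ Finset.Ioc ks kb, lam k * min (a k) (lam k))
        + ∑ k ∈ Finset.Ioc kb ke, lam k * min (a k) (lam k)
      ≤ σ ^ γ * (t₀ ^ (-m) * Jfun c q ks kb * M₀ ^ q)
        + σ ^ γ * (t₀ ^ e * Jfun e 1 kb ke * M) := add_le_add hT1 hT2
    _ = σ ^ γ * (t₀ ^ (-m) * Jfun c q ks kb * M₀ ^ q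
        + t₀ ^ e * Jfun e 1 kb ke * M) := by ring
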